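/- For every x ∈ (−1,1) and every t with cos(t/2) ≠ 0, the generalised shift operator applied to the constant function 1 equals 1, i.e. (1/(π (1−x²) cos⁴(t/2))) ∫₀^π B_{cos t}(x, cos φ, R) dφ = 1, where R = x cos t − √(1−x²) sin t cos φ. -/
import Mathlib


open MeasureTheory Real ENNReal

noncomputable section

/-- Weighted `L^p` norm `‖f(x)(1-x²)^α‖_{L^p(-1,1)}` (ess-sup when `p = ∞`). -/
def wNorm (p : ℝ≥0∞) (α : ℝ) (f : ℝ → ℝ) : ℝ≥0∞ :=
  eLpNorm (fun x => f x * (1 - x ^ 2) ^ α) p (volume.restrict (Set.Icc (-1 : ℝ) 1))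

/-- Membership in the weighted space `L_{p,α}`. -/
def MemLpw (p : ℝ≥0∞) (α : ℝ) (f : ℝ → ℝ) : Prop :=
  AEMeasurable f (volume.restrict (Set.Icc (-1 : ℝ) 1)) ∧ wNorm p α f < ⊤

/-- Best approximation of `f` by algebraic polynomials of degree at most `n - 1`. -/
def bestApprox (p : ℝ≥0∞) (α : ℝ) (n : ℕ) (f : ℝ → ℝ) : ℝ≥0∞ :=
  ⨅ P : {P : Polynomial ℝ // P.degree < (n : WithBot ℕ)},
    wNorm p α fun x => f x - (P : Polynomial ℝ).eval x

/-- `R = x cos t − √(1−x²) sin t cos φ`. -/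
def Rpt (x t φ : ℝ) : ℝ := x * Real.cos t - Real.sqrt (1 - x ^ 2) * Real.sin t * Real.cos φ

/-- The kernel `B_y(x, z, R)`. -/
def Bker (y x z R : ℝ) : ℝ :=
  2 * (Real.sqrt (1 - x ^ 2) * y + x * z * Real.sqrt (1 - y ^ 2) +
        Real.sqrt (1 - x ^ 2) * (1 - y) * (1 - z ^ 2)) ^ 2 - (1 - R ^ 2)

/-- The generalised shift operator `τ̂_t(f, x)`. -/
def shiftOp (t : ℝ) (f : ℝ → ℝ) (x : ℝ) : ℝ :=
  (1 / (π * (1 - x ^ 2) * Real.cos (t / 2) ^ 4)) *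
    ∫ φ in (0 : ℝ)..π, Bker (Real.cos t) x (Real.cos φ) (Rpt x t φ) * f (Rpt x t φ)

/-- The `r`-th generalised difference `Δ^r_{t₁,…,t_r}(f, x)`. -/
def gDiff (f : ℝ → ℝ) : (r : ℕ) → (Fin r → ℝ) → ℝ → ℝ
  | 0, _, x => f x
  | r + 1, t, x =>
      shiftOp (t (Fin.last r)) (gDiff f r fun i => t i.castSucc) x -
        gDiff f r (fun i => t i.castSucc) x

/-- The `r`-th generalised modulus of smoothness `ω_r(f, δ)_{p,α}`. -/
def modulus (p : ℝ≥0∞) (α : ℝ) (r : ℕ) (f : ℝ → ℝ) (δ : ℝ) : ℝ≥0∞ :=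
  ⨆ t : {t : Fin r → ℝ // ∀ j, |t j| ≤ δ}, wNorm p α (gDiff f r t.1)

/-- The restrictions on `p` and `α` (with separate case `p = 1`). -/
def alphaCond (p : ℝ≥0∞) (α : ℝ) : Prop :=
  (p = 1 ∧ 1 / 2 < α ∧ α ≤ 1) ∨
    (1 < p ∧ p < ⊤ ∧ 1 - 1 / (2 * p.toReal) < α ∧ α < 3 / 2 - 1 / (2 * p.toReal)) ∨
      (p = ⊤ ∧ 1 ≤ α ∧ α < 3 / 2)

/-- The restrictions on `p` and `α` (uniform for `1 ≤ p < ∞`). -/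
def alphaCond' (p : ℝ≥0∞) (α : ℝ) : Prop :=
  (p < ⊤ ∧ 1 - 1 / (2 * p.toReal) < α ∧ α < 3 / 2 - 1 / (2 * p.toReal)) ∨
    (p = ⊤ ∧ 1 ≤ α ∧ α < 3 / 2)

/-- The generalised shift operator preserves the constant function `1`. -/
theorem shiftOp_const_one (x : ℝ) (hx : x ∈ Set.Ioo (-1 : ℝ) 1) (t : ℝ)
    (ht : Real.cos (t / 2) ≠ 0) :
    (1 / (π * (1 - x ^ 2) * Real.cos (t / 2) ^ 4)) *
      ∫ φ in (0 : ℝ)..π, Bker (Real.cos t) x (Real.cos φ) (Rpt x t φ) = 1 := by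
  obtain ⟨hx1, hx2⟩ := hx
  have hx2' : (0:ℝ) < 1 - x ^ 2 := by nlinarith
  set u : ℝ := Real.sqrt (1 - x ^ 2) with hu
  set b : ℝ := Real.sqrt (1 - Real.cos t ^ 2) with hb
  have hu2 : u ^ 2 = 1 - x ^ 2 := Real.sq_sqrt hx2'.le
  have hb2 : b ^ 2 = Real.sin t ^ 2 := by
    rw [hb, Real.sin_sq t, Real.sq_sqrt (by nlinarith [Real.cos_sq_le_one t])]
  -- coefficients of the integrand as a polynomial in `cos φ`
  set c0 : ℝ := 2 * u ^ 2 + x ^ 2 * Real.cos t ^ 2 - 1 with hc0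
  set c1 : ℝ := 4 * u * x * b - 2 * x * Real.cos t * u * Real.sin t with hc1
  set c2 : ℝ := 2 * x ^ 2 * b ^ 2 - 4 * u ^ 2 * (1 - Real.cos t) + u ^ 2 * Real.sin t ^ 2
    with hc2
  set c3 : ℝ := -4 * x * b * u * (1 - Real.cos t) with hc3
  set c4 : ℝ := 2 * u ^ 2 * (1 - Real.cos t) ^ 2 with hc4
  have hpt : ∀ φ : ℝ, Bker (Real.cos t) x (Real.cos φ) (Rpt x t φ)
      = c0 + c1 * Real.cos φ + c2 * Real.cos φ ^ 2 + c3 * Real.cos φ ^ 3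
        + c4 * Real.cos φ ^ 4 := by
    intro φ
    simp only [Bker, Rpt, ← hu, ← hb, hc0, hc1, hc2, hc3, hc4]
    ring
  have hint : (∫ φ in (0 : ℝ)..π, Bker (Real.cos t) x (Real.cos φ) (Rpt x t φ))
      = c0 * π + c2 * (π / 2) + c4 * (3 * π / 8) := by
    rw [intervalIntegral.integral_congr (g := fun φ =>
      c0 + c1 * Real.cos φ + c2 * Real.cos φ ^ 2 + c3 * Real.cos φ ^ 3
        + c4 * Real.cos φ ^ 4) (fun φ _ => hpt φ)]
    have I0 : IntervalIntegrable (fun _ : ℝ => c0) volume 0 π :=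
      (continuous_const).intervalIntegrable 0 π
    have I1 : IntervalIntegrable (fun φ : ℝ => c1 * Real.cos φ) volume 0 π := by
      apply Continuous.intervalIntegrable; fun_prop
    have I2 : IntervalIntegrable (fun φ : ℝ => c2 * Real.cos φ ^ 2) volume 0 π := by
      apply Continuous.intervalIntegrable; fun_prop
    have I3 : IntervalIntegrable (fun φ : ℝ => c3 * Real.cos φ ^ 3) volume 0 π := by
      apply Continuous.intervalIntegrable; fun_prop
    have I4 : IntervalIntegrable (fun φ : ℝ => c4 * Real.cos φ ^ 4) volume 0 π := by
      apply Continuous.intervalIntegrable; fun_prop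
    rw [intervalIntegral.integral_add (((I0.add I1).add I2).add I3) I4,
      intervalIntegral.integral_add ((I0.add I1).add I2) I3,
      intervalIntegral.integral_add (I0.add I1) I2,
      intervalIntegral.integral_add I0 I1,
      intervalIntegral.integral_const,
      intervalIntegral.integral_const_mul, intervalIntegral.integral_const_mul,
      intervalIntegral.integral_const_mul, intervalIntegral.integral_const_mul,
      integral_cos, integral_cos_sq, integral_cos_pow_three]
    have h4 : (∫ φ in (0 : ℝ)..π, Real.cos φ ^ 4) = 3 * π / 8 := by
      have := integral_cos_pow (a := 0) (b := π) 2
      rw [integral_cos_sq] at this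
      norm_num at this
      linarith
    rw [h4]
    simp [Real.sin_pi, Real.cos_pi]
    ring
  rw [hint]
  -- now pure algebra
  have hcos : Real.cos t = 2 * Real.cos (t / 2) ^ 2 - 1 := by
    have := Real.cos_sq (t / 2)
    rw [show 2 * (t / 2) = t by ring] at this
    linarith
  have hval : c0 * π + c2 * (π / 2) + c4 * (3 * π / 8)
      = π * (1 - x ^ 2) * Real.cos (t / 2) ^ 4 := by
    have hs2 : Real.sin t ^ 2 = 1 - Real.cos t ^ 2 := by
      nlinarith [Real.sin_sq_add_cos_sq t]
    simp only [hc0, hc2, hc4, hb2, hs2, hu2, hcos]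
    ring
  rw [hval]
  have hπ : π ≠ 0 := Real.pi_ne_zero
  field_simp
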